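/- arXiv:math/0411231 — 3 statements merged into one kernel-verified Lean document; each statement's English description precedes it below -/
import Mathlib

section
/- For a fixed positive integer i, the map n ↦ n^{<i>} is strictly increasing on positive integers: if m < n then m^{<i>} < n^{<i>}. -/
/-- `msucc i n` is Macaulay's `n^{<i>}`: from the `i`-binomial expansion
`n = C(n_i,i) + ... + C(n_j,j)` (computed greedily), replace each term
`C(n_k,k)` by `C(n_k+1,k+1)`.  By convention `msucc i 0 = 0` and `msucc 0 n = 0`. -/
def msucc : ℕ → ℕ → ℕ
  | 0, _ => 0
  | _ + 1, 0 => 0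
  | (i + 1), (n + 1) =>
      let m := Nat.findGreatest (fun k => Nat.choose k (i + 1) ≤ n + 1) (n + i + 2)
      Nat.choose (m + 1) (i + 2) + msucc i ((n + 1) - Nat.choose m (i + 1))

/-- An (infinite) O-sequence: starts with 1 and satisfies Macaulay's growth condition. -/
def IsOSeq (h : ℕ → ℕ) : Prop :=
  h 0 = 1 ∧ ∀ d, 1 ≤ d → h (d + 1) ≤ msucc d (h d)

/-- A finite O-sequence of length `d` (entries of degree `0,…,d`). -/
def FinOSeq (g : ℕ → ℕ) (d : ℕ) : Prop :=
  g 0 = 1 ∧ ∀ k, 1 ≤ k → k + 1 ≤ d → g (k + 1) ≤ msucc k (g k)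

/-- First difference of a sequence, with `(Diff h) 0 = 1`. -/
def Diff (h : ℕ → ℕ) : ℕ → ℕ := fun k => if k = 0 then 1 else h k - h (k - 1)

/-- An SI-sequence of socle degree `e`: symmetric and its first half is differentiable. -/
def IsSISeq (h : ℕ → ℕ) (e : ℕ) : Prop :=
  (∀ i ≤ e, h i = h (e - i)) ∧ FinOSeq (Diff h) (e / 2)

/-- Unimodality of `(h 0, …, h e)`. -/
def Unimodal (h : ℕ → ℕ) (e : ℕ) : Prop :=
  ∃ m ≤ e, (∀ i j, i ≤ j → j ≤ m → h i ≤ h j) ∧ (∀ i j, m ≤ i → i ≤ j → j ≤ e → h j ≤ h i)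

def mtop (i n : ℕ) : ℕ :=
  Nat.findGreatest (fun k => Nat.choose k (i + 1) ≤ n + 1) (n + i + 2)

lemma msucc_succ (i n : ℕ) :
    msucc (i + 1) (n + 1) =
      Nat.choose (mtop i n + 1) (i + 2) + msucc i ((n + 1) - Nat.choose (mtop i n) (i + 1)) := by
  rfl

lemma choose_lb (i n : ℕ) : n + 2 ≤ Nat.choose (n + i + 2) (i + 1) := by
  induction i with
  | zero => simp [Nat.choose_one_right]
  | succ i ih =>
    have h : Nat.choose (n + i + 3) (i + 2)
        = Nat.choose (n + i + 2) (i + 1) + Nat.choose (n + i + 2) (i + 2) :=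
      Nat.choose_succ_succ (n + i + 2) (i + 1)
    have e : n + (i + 1) + 2 = n + i + 3 := by omega
    rw [e]
    show n + 2 ≤ Nat.choose (n + i + 3) (i + 2)
    omega

lemma mtop_ge (i n : ℕ) : i + 1 ≤ mtop i n := by
  unfold mtop
  exact Nat.le_findGreatest (m := i + 1) (by omega) (by simp)

lemma mtop_le (i n : ℕ) : Nat.choose (mtop i n) (i + 1) ≤ n + 1 := by
  have h := mtop_ge i n
  unfold mtop at h ⊢
  exact Nat.findGreatest_spec (m := i + 1) (P := fun k => Nat.choose k (i + 1) ≤ n + 1)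
    (by omega) (by simp)

lemma mtop_lt (i n : ℕ) : n + 1 < Nat.choose (mtop i n + 1) (i + 1) := by
  by_cases h : mtop i n + 1 ≤ n + i + 2
  · have h2 : ¬ (Nat.choose (mtop i n + 1) (i + 1) ≤ n + 1) := by
      have := Nat.findGreatest_is_greatest (P := fun k => Nat.choose k (i + 1) ≤ n + 1)
        (n := n + i + 2) (k := mtop i n + 1) (by unfold mtop; omega) h
      simpa using this
    omega
  · have hle : mtop i n ≤ n + i + 2 := Nat.findGreatest_le _
    have heq : mtop i n = n + i + 2 := by omega
    have h2 := mtop_le i n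
    rw [heq] at h2
    have := choose_lb i n
    omega

lemma mtop_max (i n a : ℕ) (h : Nat.choose a (i + 1) ≤ n + 1) : a ≤ mtop i n := by
  by_contra hc
  have h1 : mtop i n + 1 ≤ a := by omega
  have h2 := Nat.choose_le_choose (i + 1) h1
  have h3 := mtop_lt i n
  omega

lemma choose_strict {a b k : ℕ} (hk : k + 1 ≤ a) (hab : a < b) :
    Nat.choose a (k + 1) < Nat.choose b (k + 1) := by
  have h1 : Nat.choose (a + 1) (k + 1) ≤ Nat.choose b (k + 1) :=
    Nat.choose_le_choose _ (by omega)
  have h2 : Nat.choose (a + 1) (k + 1) = Nat.choose a k + Nat.choose a (k + 1) :=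
    Nat.choose_succ_succ a k
  have h3 : 0 < Nat.choose a k := Nat.choose_pos (by omega)
  omega

lemma msucc_one (n : ℕ) : msucc 1 (n + 1) = Nat.choose (n + 2) 2 := by
  have h1 : mtop 0 n = n + 1 := by
    have h2 := mtop_le 0 n
    have h3 := mtop_lt 0 n
    simp [Nat.choose_one_right] at h2 h3
    omega
  rw [msucc_succ, h1]
  simp [msucc]

/-- Lemma A: if `N < C(c, i+1)` then `msucc (i+1) N < C(c+1, i+2)`. -/
lemma msucc_lt_choose : ∀ i N c, N < Nat.choose c (i + 1) →
    msucc (i + 1) N < Nat.choose (c + 1) (i + 2) := by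
  intro i
  induction i with
  | zero =>
    intro N c hN
    simp [Nat.choose_one_right] at hN
    match N with
    | 0 =>
      have : 0 < Nat.choose (c + 1) 2 := Nat.choose_pos (by omega)
      simpa [msucc] using this
    | n + 1 =>
      rw [msucc_one]
      exact choose_strict (k := 1) (by omega) (by omega)
  | succ i ih =>
    intro N c hN'
    have hN : N < Nat.choose c (i + 2) := hN'
    have hc : i + 2 ≤ c := by
      by_contra h
      rw [Nat.choose_eq_zero_of_lt (by omega)] at hN
      omega
    match N with
    | 0 =>
      have : 0 < Nat.choose (c + 1) (i + 3) := Nat.choose_pos (by omega)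
      simpa [msucc] using this
    | n + 1 =>
      set m := mtop (i + 1) n with hm
      have key : msucc (i + 2) (n + 1) =
          Nat.choose (m + 1) (i + 3) + msucc (i + 1) ((n + 1) - Nat.choose m (i + 2)) :=
        msucc_succ (i + 1) n
      have h1 : i + 2 ≤ m := mtop_ge (i + 1) n
      have h2 : Nat.choose m (i + 2) ≤ n + 1 := mtop_le (i + 1) n
      have h3 : n + 1 < Nat.choose (m + 1) (i + 2) := mtop_lt (i + 1) n
      have hp : Nat.choose (m + 1) (i + 2) = Nat.choose m (i + 1) + Nat.choose m (i + 2) :=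
        Nat.choose_succ_succ m (i + 1)
      have hr : (n + 1) - Nat.choose m (i + 2) < Nat.choose m (i + 1) := by omega
      have hrec : msucc (i + 1) ((n + 1) - Nat.choose m (i + 2)) < Nat.choose (m + 1) (i + 2) :=
        ih ((n + 1) - Nat.choose m (i + 2)) m hr
      have hmc : m < c := by
        by_contra h
        have := Nat.choose_le_choose (i + 2) (show c ≤ m by omega)
        omega
      have hp2 : Nat.choose (m + 2) (i + 3)
          = Nat.choose (m + 1) (i + 2) + Nat.choose (m + 1) (i + 3) :=
        Nat.choose_succ_succ (m + 1) (i + 2)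
      have hle : Nat.choose (m + 2) (i + 3) ≤ Nat.choose (c + 1) (i + 3) :=
        Nat.choose_le_choose _ (by omega)
      have goal : msucc (i + 2) (n + 1) < Nat.choose (c + 1) (i + 3) := by omega
      exact goal

/-- Lemma B: positivity. -/
lemma msucc_pos (i n : ℕ) : 0 < msucc (i + 1) (n + 1) := by
  rw [msucc_succ]
  have h1 := mtop_ge i n
  have : 0 < Nat.choose (mtop i n + 1) (i + 2) := Nat.choose_pos (by omega)
  omega

lemma msucc_strict : ∀ i m n, 0 < m → m < n → msucc (i + 1) m < msucc (i + 1) n := by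
  intro i
  induction i with
  | zero =>
    intro m n hm hmn
    match m, n, hm, hmn with
    | m' + 1, n' + 1, _, hmn =>
      rw [msucc_one, msucc_one]
      exact choose_strict (k := 1) (by omega) (by omega)
  | succ i ih =>
    intro m n hm hmn
    match m, n, hm, hmn with
    | m' + 1, n' + 1, _, hmn =>
      set a := mtop (i + 1) m' with ha
      set b := mtop (i + 1) n' with hb
      have keym : msucc (i + 2) (m' + 1) =
          Nat.choose (a + 1) (i + 3) + msucc (i + 1) ((m' + 1) - Nat.choose a (i + 2)) :=
        msucc_succ (i + 1) m'
      have keyn : msucc (i + 2) (n' + 1) =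
          Nat.choose (b + 1) (i + 3) + msucc (i + 1) ((n' + 1) - Nat.choose b (i + 2)) :=
        msucc_succ (i + 1) n'
      have ha1 : i + 2 ≤ a := mtop_ge (i + 1) m'
      have ha2 : Nat.choose a (i + 2) ≤ m' + 1 := mtop_le (i + 1) m'
      have ha3 : m' + 1 < Nat.choose (a + 1) (i + 2) := mtop_lt (i + 1) m'
      have hb2 : Nat.choose b (i + 2) ≤ n' + 1 := mtop_le (i + 1) n'
      have hab : a ≤ b := mtop_max (i + 1) n' a (show Nat.choose a (i + 2) ≤ n' + 1 by omega)
      show msucc (i + 2) (m' + 1) < msucc (i + 2) (n' + 1)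
      rcases eq_or_lt_of_le hab with heq | hlt
      · rw [keym, keyn, ← heq]
        have hrlt : (m' + 1) - Nat.choose a (i + 2) < (n' + 1) - Nat.choose a (i + 2) := by
          omega
        rcases Nat.eq_zero_or_pos ((m' + 1) - Nat.choose a (i + 2)) with hz | hpos
        · rw [hz]
          have hpos' : 0 < msucc (i + 1) ((n' + 1) - Nat.choose a (i + 2)) := by
            obtain ⟨k, hk⟩ := Nat.exists_eq_add_of_lt
              (show 0 < (n' + 1) - Nat.choose a (i + 2) by omega)
            rw [show (n' + 1) - Nat.choose a (i + 2) = k + 1 by omega]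
            exact msucc_pos i k
          have hz' : msucc (i + 1) 0 = 0 := by simp [msucc]
          omega
        · exact Nat.add_lt_add_left (ih _ _ hpos hrlt) _
      · calc msucc (i + 2) (m' + 1) < Nat.choose (a + 2) (i + 3) :=
              msucc_lt_choose (i + 1) (m' + 1) (a + 1) (by exact ha3)
          _ ≤ Nat.choose (b + 1) (i + 3) := Nat.choose_le_choose _ (by omega)
          _ ≤ msucc (i + 2) (n' + 1) := by rw [keyn]; omega


/-- For fixed positive `i`, the map `n ↦ n^{<i>}` is strictly increasing on positive integers. -/
theorem stmt3 (i m n : ℕ) (hi : 0 < i) (hm : 0 < m) (hmn : m < n) :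
    msucc i m < msucc i n := by
  match i, hi with
  | i + 1, _ => exact msucc_strict i m n hm hmn
end

section
/- Let h = (h_0, h_1, h_2, ...) be an O-sequence with h_0 = 1 and h_1 = 2. For every i ≥ 1, either h_i = i+1 (the generic value) or the sequence is non-increasing from index i on, i.e. h_j ≥ h_{j+1} for all j ≥ i. -/
lemma msucc_zero (d : ℕ) : msucc d 0 = 0 := by
  cases d <;> rfl

lemma msucc_succ_eq (i n : ℕ) :
    msucc (i + 1) (n + 1) =
      Nat.choose (Nat.findGreatest (fun k => Nat.choose k (i + 1) ≤ n + 1) (n + i + 2) + 1) (i + 2)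
        + msucc i ((n + 1) - Nat.choose
            (Nat.findGreatest (fun k => Nat.choose k (i + 1) ≤ n + 1) (n + i + 2)) (i + 1)) := rfl

lemma msucc_of_le (d : ℕ) : ∀ n, n ≤ d → msucc d n = n := by
  induction d with
  | zero => intro n hn; interval_cases n; rfl
  | succ i ih =>
    intro n hn
    match n, hn with
    | 0, _ => exact msucc_zero _
    | (n+1), hn =>
      have hn' : n ≤ i := Nat.lt_succ_iff.mp hn
      have hm : Nat.findGreatest (fun k => Nat.choose k (i + 1) ≤ n + 1) (n + i + 2) = i + 1 := by
        rw [Nat.findGreatest_eq_iff]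
        refine ⟨by omega, fun _ => by simp, fun k hk hk2 hP => ?_⟩
        have : Nat.choose (i + 2) (i + 1) ≤ Nat.choose k (i + 1) :=
          Nat.choose_le_choose _ hk
        rw [Nat.choose_succ_self_right] at this
        omega
      rw [msucc_succ_eq, hm, Nat.choose_self, Nat.choose_self, Nat.add_sub_cancel, ih n hn']
      omega

lemma msucc_succ_self (d : ℕ) : msucc (d + 1) (d + 2) = d + 3 := by
  have hm : Nat.findGreatest (fun k => Nat.choose k (d + 1) ≤ d + 1 + 1) (d + 1 + d + 2)
      = d + 2 := by
    rw [Nat.findGreatest_eq_iff]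
    refine ⟨by omega, fun _ => by rw [Nat.choose_succ_self_right], fun k hk hk2 hP => ?_⟩
    have h3 : Nat.choose (d + 3) (d + 1) ≤ Nat.choose k (d + 1) := Nat.choose_le_choose _ hk
    have he : Nat.choose (d + 3) (d + 1) = Nat.choose (d + 3) 2 := by
      rw [← Nat.choose_symm (show d + 1 ≤ d + 3 by omega)]; congr 1; omega
    have h2 : Nat.choose (d + 3) 2 = (d + 3) * (d + 2) / 2 := by
      rw [Nat.choose_two_right]; norm_num
    have : (d + 3) * (d + 2) / 2 ≥ d + 3 := by
      rw [ge_iff_le, Nat.le_div_iff_mul_le (by norm_num)]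
      nlinarith
    omega
  rw [show d + 2 = (d + 1) + 1 from rfl, msucc_succ_eq, hm, Nat.choose_succ_self_right,
    Nat.choose_succ_self_right]
  simp [msucc_zero]

lemma msucc_succ_self' (d : ℕ) (hd : 1 ≤ d) : msucc d (d + 1) = d + 2 := by
  obtain ⟨e, rfl⟩ := Nat.exists_eq_add_of_le hd
  rw [Nat.add_comm 1 e]
  exact msucc_succ_self e

/-- An O-sequence with `h 0 = 1`, `h 1 = 2`: for every `i ≥ 1`, either `h i = i + 1`
(the generic value) or the sequence is non-increasing from index `i` on. -/
theorem stmt7 (h : ℕ → ℕ) (hO : IsOSeq h) (h1 : h 1 = 2) :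
    ∀ i, 1 ≤ i → h i = i + 1 ∨ ∀ j, i ≤ j → h (j + 1) ≤ h j := by
  obtain ⟨h0, hgrow⟩ := hO
  have hb : ∀ d, 1 ≤ d → h d ≤ d + 1 := by
    intro d hd
    induction d with
    | zero => omega
    | succ k ih =>
      rcases Nat.eq_or_lt_of_le hd with he | hlt
      · have : k = 0 := by omega
        subst this; simpa using h1.le
      · have hk1 : 1 ≤ k := by omega
        have hk := ih hk1
        have hg := hgrow k hk1
        rcases eq_or_lt_of_le hk with heq | hlt'
        · rw [heq, msucc_succ_self' k hk1] at hg; omega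
        · have : h k ≤ k := by omega
          rw [msucc_of_le k _ this] at hg; omega
  intro i hi
  by_cases hgen : h i = i + 1
  · exact Or.inl hgen
  · right
    have hle : h i ≤ i := by have := hb i hi; omega
    have key : ∀ j, i ≤ j → h j ≤ j := by
      intro j hj
      induction j, hj using Nat.le_induction with
      | base => exact hle
      | succ k hk ihk =>
        have := hgrow k (le_trans hi hk)
        rw [msucc_of_le k _ ihk] at this
        omega
    intro j hj
    have := hgrow j (le_trans hi hj)
    rw [msucc_of_le j _ (key j hj)] at this
    exact this
end

section
/- Let Δ = (Δ_0 = 1, Δ_1 = 2, Δ_2, ..., Δ_e) be an O-sequence and let 2 ≤ i ≤ ⌊e/2⌋. If Δ_{i-1} ≤ i - 1 (i.e. Δ_{i-1} is not generic), then Δ_{i-1} ≥ Δ_{e-(i-1)} ≥ Δ_{e-(i-2)} and Δ_{i-1} ≥ Δ_i. -/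
lemma msucc_small : ∀ d n, n ≤ d → msucc d n = n := by
  intro d
  induction d with
  | zero => intro n h; interval_cases n; rfl
  | succ i ih =>
    intro n hn
    match n with
    | 0 => rfl
    | (m+1) =>
      show (let M := Nat.findGreatest (fun k => Nat.choose k (i + 1) ≤ m + 1) (m + i + 2);
        Nat.choose (M + 1) (i + 2) + msucc i ((m + 1) - Nat.choose M (i + 1))) = m + 1
      have hM : Nat.findGreatest (fun k => Nat.choose k (i + 1) ≤ m + 1) (m + i + 2) = i + 1 := by
        apply Nat.findGreatest_eq_iff.mpr
        refine ⟨by omega, fun _ => by simp, ?_⟩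
        intro k hk _ hP
        have h1 : Nat.choose (i + 2) (i + 1) ≤ Nat.choose k (i + 1) :=
          Nat.choose_le_choose _ (by omega)
        rw [Nat.choose_succ_self_right] at h1
        omega
      simp only [hM]
      rw [Nat.choose_self, Nat.choose_self]
      have := ih m (by omega)
      simp [this]
      omega

lemma dec_from (Δ : ℕ → ℕ) (e : ℕ) (hΔ : FinOSeq Δ e) (k : ℕ) (hk : 1 ≤ k)
    (hsm : Δ k ≤ k) : ∀ j, k ≤ j → j ≤ e → Δ j ≤ Δ k := by
  intro j
  induction j with
  | zero => intro h1 _; omega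
  | succ j ihj =>
    intro h1 h2
    rcases Nat.lt_or_ge k (j+1) with h | h
    · have hj1 : 1 ≤ j := by omega
      have hjk : Δ j ≤ Δ k := ihj (by omega) (by omega)
      have hjj : Δ j ≤ j := le_trans hjk (le_trans hsm (by omega))
      have := hΔ.2 j hj1 h2
      rw [msucc_small j (Δ j) hjj] at this
      omega
    · have hkj : k = j + 1 := by omega
      rw [hkj]

theorem stmt12' (Δ : ℕ → ℕ) (e : ℕ) (hΔ : FinOSeq Δ e) (h1 : Δ 1 = 2)
    (i : ℕ) (hi : 2 ≤ i) (hie : i ≤ e / 2) (hng : Δ (i - 1) ≤ i - 1) :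
    Δ (e - (i - 1)) ≤ Δ (i - 1) ∧ Δ (e - (i - 2)) ≤ Δ (e - (i - 1)) ∧ Δ i ≤ Δ (i - 1) := by
  have h2i : 2 * i ≤ e := by omega
  have hk1 : (1:ℕ) ≤ i - 1 := by omega
  have hdec := dec_from Δ e hΔ (i-1) hk1 hng
  have A : Δ (e - (i - 1)) ≤ Δ (i - 1) := hdec _ (by omega) (by omega)
  have C : Δ i ≤ Δ (i - 1) := hdec i (by omega) (by omega)
  refine ⟨A, ?_, C⟩
  have hsm2 : Δ (e - (i-1)) ≤ e - (i-1) :=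
    le_trans A (le_trans hng (by omega))
  have hdec2 := dec_from Δ e hΔ (e - (i-1)) (by omega) hsm2
  exact hdec2 _ (by omega) (by omega)

/-- If `Δ = (1, 2, Δ₂, …, Δ_e)` is an O-sequence, `2 ≤ i ≤ ⌊e/2⌋`, and
`Δ (i-1) ≤ i - 1` (not generic), then
`Δ (i-1) ≥ Δ (e-(i-1)) ≥ Δ (e-(i-2))` and `Δ (i-1) ≥ Δ i`. -/
theorem stmt12 (Δ : ℕ → ℕ) (e : ℕ) (hΔ : FinOSeq Δ e) (h1 : Δ 1 = 2)
    (i : ℕ) (hi : 2 ≤ i) (hie : i ≤ e / 2) (hng : Δ (i - 1) ≤ i - 1) :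
    Δ (e - (i - 1)) ≤ Δ (i - 1) ∧ Δ (e - (i - 2)) ≤ Δ (e - (i - 1)) ∧ Δ i ≤ Δ (i - 1) := by
  exact stmt12' Δ e hΔ h1 i hi hie hng
end
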